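/- For every integer n ≥ 1, the set P_n + σ_Z is the disjoint union of P_n \ P_{n+1} and P_{n+1} + σ_Z; that is, P_n + σ_Z = (P_n \ P_{n+1}) ⊔ (P_{n+1} + σ_Z). -/
import Mathlib


open Pointwise

/-- The submonoid `σ_Z ⊂ ℤ²` of pairs `(a,b)` with `0 ≤ b` and `3b ≤ 4a`. -/
def sigmaZ : Set (ℤ × ℤ) := {a : ℤ × ℤ | 0 ≤ a.2 ∧ 3 * a.2 ≤ 4 * a.1}

/-- The point `p_n`. -/
def pPt (n : ℤ) : ℤ × ℤ := if Odd n then ((n + 3) / 2, 0) else (n / 2 + 1, 0)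

/-- The point `s_n`. -/
def sPt (n : ℤ) : ℤ × ℤ :=
  if Odd n then (3 * (n + 1) / 2, 2 * (n + 1)) else (3 * (n + 2) / 2, 2 * (n + 2))

/-- The point `q^i = (n+1-i, n-2i)`. -/
def qPt (n i : ℤ) : ℤ × ℤ := (n + 1 - i, n - 2 * i)

/-- The point `r^j = (n+1+j, n+1+2j)`. -/
def rPt (n j : ℤ) : ℤ × ℤ := (n + 1 + j, n + 1 + 2 * j)

/-- The set `P_n ⊂ ℤ²`. -/
def Pset (n : ℤ) : Set (ℤ × ℤ) :=
  {pPt n, sPt n}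
    ∪ {x | ∃ i : ℤ, 0 ≤ i ∧ i ≤ (if Odd n then (n - 1) / 2 else (n - 2) / 2) ∧ x = qPt n i}
    ∪ {x | ∃ j : ℤ, 0 ≤ j ∧ j ≤ (if Odd n then (n - 1) / 2 else n / 2) ∧ x = rPt n j}

/-- The set `D_n = σ_Z \ (P_n + σ_Z)`, where `+` is pointwise addition of sets. -/
def Dset (n : ℤ) : Set (ℤ × ℤ) := sigmaZ \ (Pset n + sigmaZ)

lemma mem_add_iff (S : Set (ℤ × ℤ)) (x : ℤ × ℤ) :
    x ∈ S + sigmaZ ↔ ∃ p ∈ S, p.2 ≤ x.2 ∧ 3 * (x.2 - p.2) ≤ 4 * (x.1 - p.1) := by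
  rw [Set.mem_add]
  constructor
  · rintro ⟨p, hp, s, hs, rfl⟩
    obtain ⟨h1, h2⟩ := hs
    exact ⟨p, hp, by simp [Prod.snd_add]; omega, by simp [Prod.fst_add, Prod.snd_add]; omega⟩
  · rintro ⟨p, hp, h1, h2⟩
    refine ⟨p, hp, x - p, ⟨?_, ?_⟩, by abel⟩
    · simp [Prod.snd_sub]; omega
    · simp [Prod.fst_sub, Prod.snd_sub]; omega

lemma memP_odd (k : ℤ) (hk : 0 ≤ k) (x : ℤ × ℤ) :
    x ∈ Pset (2*k+1) ↔
      (x.1 = k+2 ∧ x.2 = 0) ∨ (x.1 = 3*k+3 ∧ x.2 = 4*k+4) ∨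
      (∃ i, 0 ≤ i ∧ i ≤ k ∧ x.1 = 2*k+2-i ∧ x.2 = 2*k+1-2*i) ∨
      (∃ j, 0 ≤ j ∧ j ≤ k ∧ x.1 = 2*k+2+j ∧ x.2 = 2*k+2+2*j) := by
  have hodd : Odd (2*k+1) := ⟨k, by ring⟩
  simp only [Pset, Set.mem_union, Set.mem_insert_iff, Set.mem_singleton_iff,
    Set.mem_setOf_eq, pPt, sPt, qPt, rPt, if_pos hodd, Prod.ext_iff]
  constructor
  · rintro (((⟨h1, h2⟩ | ⟨h1, h2⟩) | ⟨i, h1, h2, h3, h4⟩) | ⟨j, h1, h2, h3, h4⟩)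
    · exact Or.inl ⟨by omega, by omega⟩
    · exact Or.inr (Or.inl ⟨by omega, by omega⟩)
    · exact Or.inr (Or.inr (Or.inl ⟨i, h1, by omega, by omega, by omega⟩))
    · exact Or.inr (Or.inr (Or.inr ⟨j, h1, by omega, by omega, by omega⟩))
  · rintro (⟨h1, h2⟩ | ⟨h1, h2⟩ | ⟨i, h1, h2, h3, h4⟩ | ⟨j, h1, h2, h3, h4⟩)
    · exact Or.inl (Or.inl (Or.inl ⟨by omega, by omega⟩))
    · exact Or.inl (Or.inl (Or.inr ⟨by omega, by omega⟩))
    · exact Or.inl (Or.inr ⟨i, h1, by omega, by omega, by omega⟩)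
    · exact Or.inr ⟨j, h1, by omega, by omega, by omega⟩

lemma memP_even (k : ℤ) (hk : 1 ≤ k) (x : ℤ × ℤ) :
    x ∈ Pset (2*k) ↔
      (x.1 = k+1 ∧ x.2 = 0) ∨ (x.1 = 3*k+3 ∧ x.2 = 4*k+4) ∨
      (∃ i, 0 ≤ i ∧ i ≤ k-1 ∧ x.1 = 2*k+1-i ∧ x.2 = 2*k-2*i) ∨
      (∃ j, 0 ≤ j ∧ j ≤ k ∧ x.1 = 2*k+1+j ∧ x.2 = 2*k+1+2*j) := by
  have hodd : ¬ Odd (2*k) := by rintro ⟨t, ht⟩; omega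
  simp only [Pset, Set.mem_union, Set.mem_insert_iff, Set.mem_singleton_iff,
    Set.mem_setOf_eq, pPt, sPt, qPt, rPt, if_neg hodd, Prod.ext_iff]
  constructor
  · rintro (((⟨h1, h2⟩ | ⟨h1, h2⟩) | ⟨i, h1, h2, h3, h4⟩) | ⟨j, h1, h2, h3, h4⟩)
    · exact Or.inl ⟨by omega, by omega⟩
    · exact Or.inr (Or.inl ⟨by omega, by omega⟩)
    · exact Or.inr (Or.inr (Or.inl ⟨i, h1, by omega, by omega, by omega⟩))
    · exact Or.inr (Or.inr (Or.inr ⟨j, h1, by omega, by omega, by omega⟩))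
  · rintro (⟨h1, h2⟩ | ⟨h1, h2⟩ | ⟨i, h1, h2, h3, h4⟩ | ⟨j, h1, h2, h3, h4⟩)
    · exact Or.inl (Or.inl (Or.inl ⟨by omega, by omega⟩))
    · exact Or.inl (Or.inl (Or.inr ⟨by omega, by omega⟩))
    · exact Or.inl (Or.inr ⟨i, h1, by omega, by omega, by omega⟩)
    · exact Or.inr ⟨j, h1, by omega, by omega, by omega⟩

lemma not_dom {S : Set (ℤ × ℤ)} {x : ℤ × ℤ} (h : x ∉ S + sigmaZ) (c d : ℤ)
    (hm : ((c, d) : ℤ × ℤ) ∈ S) :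
    ¬ (d ≤ x.2 ∧ 3 * (x.2 - d) ≤ 4 * (x.1 - c)) := by
  intro hc
  exact h ((mem_add_iff S x).mpr ⟨(c, d), hm, hc.1, hc.2⟩)

lemma subset_add (S : Set (ℤ × ℤ)) : S ⊆ S + sigmaZ := fun y hy =>
  (mem_add_iff S y).mpr ⟨y, hy, by omega, by omega⟩
lemma hard_odd (k : ℤ) (hk : 0 ≤ k) (x : ℤ × ℤ)
    (hx : x ∈ Pset (2*k+1) + sigmaZ) (hnot : x ∉ Pset (2*(k+1)) + sigmaZ) :
    x ∈ Pset (2*k+1) := by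
  rw [mem_add_iff] at hx
  obtain ⟨p, hp, hd1, hd2⟩ := hx
  rw [memP_odd k hk] at hp
  have hk1 : (1:ℤ) ≤ k+1 := by omega
  have Hp : ¬ ((0:ℤ) ≤ x.2 ∧ 3 * (x.2 - 0) ≤ 4 * (x.1 - ((k+1)+1))) :=
    not_dom hnot _ _ ((memP_even (k+1) hk1 _).mpr (Or.inl ⟨rfl, rfl⟩))
  have Hs : ¬ (4*(k+1)+4 ≤ x.2 ∧ 3 * (x.2 - (4*(k+1)+4)) ≤ 4 * (x.1 - (3*(k+1)+3))) :=
    not_dom hnot _ _ ((memP_even (k+1) hk1 _).mpr (Or.inr (Or.inl ⟨rfl, rfl⟩)))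
  have Hq : ∀ i : ℤ, 0 ≤ i → i ≤ k →
      ¬ (2*(k+1)-2*i ≤ x.2 ∧ 3 * (x.2 - (2*(k+1)-2*i)) ≤ 4 * (x.1 - (2*(k+1)+1-i))) :=
    fun i h1 h2 => not_dom hnot _ _
      ((memP_even (k+1) hk1 _).mpr (Or.inr (Or.inr (Or.inl ⟨i, h1, by omega, rfl, rfl⟩))))
  have Hr : ∀ j : ℤ, 0 ≤ j → j ≤ k+1 →
      ¬ (2*(k+1)+1+2*j ≤ x.2 ∧ 3 * (x.2 - (2*(k+1)+1+2*j)) ≤ 4 * (x.1 - (2*(k+1)+1+j))) :=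
    fun j h1 h2 => not_dom hnot _ _
      ((memP_even (k+1) hk1 _).mpr (Or.inr (Or.inr (Or.inr ⟨j, h1, h2, rfl, rfl⟩))))
  have hlow : 0 ≤ x.2 ∧ 0 ≤ 4*x.1-3*x.2 ∧ (x.2 ≤ 0 → 4*k+8 ≤ 4*x.1-3*x.2) ∧
      (x.2 ≤ 2*k+1 → 4*k+5-x.2 ≤ 4*x.1-3*x.2) ∧ (x.2 ≤ 4*k+3 → 4*k+4-x.2 ≤ 4*x.1-3*x.2) := by
    rcases hp with ⟨h1, h2⟩ | ⟨h1, h2⟩ | ⟨i, h0, h1, h2, h3⟩ | ⟨j, h0, h1, h2, h3⟩ <;> omega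
  clear hp hd1 hd2 p
  rw [memP_odd k hk]
  rcases le_or_gt x.2 (2*k+1) with hb | hb
  · -- q region (or impossible)
    rcases le_or_gt x.2 1 with hb1 | hb1
    · exact Or.inr (Or.inr (Or.inl ⟨(2*k+1-x.2)/2, by omega, by omega, by omega, by omega⟩))
    · have A := Hq ((2*(k+1)+1-x.2)/2) (by omega) (by omega)
      exact Or.inr (Or.inr (Or.inl ⟨(2*k+1-x.2)/2, by omega, by omega, by omega, by omega⟩))
  · rcases le_or_gt x.2 (4*k+3) with hb2 | hb2
    · -- r region
      rcases le_or_gt x.2 (2*k+2) with hc | hc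
      · have A := Hq 0 (le_refl 0) hk
        exact Or.inr (Or.inr (Or.inr ⟨0, le_refl 0, hk, by omega, by omega⟩))
      · have B := Hr ((x.2-(2*(k+1)+1))/2) (by omega) (by omega)
        exact Or.inr (Or.inr (Or.inr ⟨(x.2-(2*k+2))/2, by omega, by omega, by omega, by omega⟩))
    · -- s point
      have B1 := Hr k (by omega) (by omega)
      have B2 := Hr (k+1) (by omega) (le_refl _)
      exact Or.inr (Or.inl ⟨by omega, by omega⟩)

lemma hard_even (k : ℤ) (hk : 1 ≤ k) (x : ℤ × ℤ)
    (hx : x ∈ Pset (2*k) + sigmaZ) (hnot : x ∉ Pset (2*k+1) + sigmaZ) :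
    x ∈ Pset (2*k) := by
  rw [mem_add_iff] at hx
  obtain ⟨p, hp, hd1, hd2⟩ := hx
  rw [memP_even k hk] at hp
  have hk0 : (0:ℤ) ≤ k := by omega
  have Hp : ¬ ((0:ℤ) ≤ x.2 ∧ 3 * (x.2 - 0) ≤ 4 * (x.1 - (k+2))) :=
    not_dom hnot _ _ ((memP_odd k hk0 _).mpr (Or.inl ⟨rfl, rfl⟩))
  have Hs : ¬ (4*k+4 ≤ x.2 ∧ 3 * (x.2 - (4*k+4)) ≤ 4 * (x.1 - (3*k+3))) :=
    not_dom hnot _ _ ((memP_odd k hk0 _).mpr (Or.inr (Or.inl ⟨rfl, rfl⟩)))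
  have Hq : ∀ i : ℤ, 0 ≤ i → i ≤ k →
      ¬ (2*k+1-2*i ≤ x.2 ∧ 3 * (x.2 - (2*k+1-2*i)) ≤ 4 * (x.1 - (2*k+2-i))) :=
    fun i h1 h2 => not_dom hnot _ _
      ((memP_odd k hk0 _).mpr (Or.inr (Or.inr (Or.inl ⟨i, h1, h2, rfl, rfl⟩))))
  have Hr : ∀ j : ℤ, 0 ≤ j → j ≤ k →
      ¬ (2*k+2+2*j ≤ x.2 ∧ 3 * (x.2 - (2*k+2+2*j)) ≤ 4 * (x.1 - (2*k+2+j))) :=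
    fun j h1 h2 => not_dom hnot _ _
      ((memP_odd k hk0 _).mpr (Or.inr (Or.inr (Or.inr ⟨j, h1, h2, rfl, rfl⟩))))
  have hlow : 0 ≤ x.2 ∧ 0 ≤ 4*x.1-3*x.2 ∧ (x.2 ≤ 0 → 4*k+4 ≤ 4*x.1-3*x.2) ∧
      (x.2 ≤ 2*k → 4*k+4-x.2 ≤ 4*x.1-3*x.2) ∧
      (x.2 ≤ 4*k+3 → 4*k+2-x.2 ≤ 4*x.1-3*x.2 ∧ 1 ≤ 4*x.1-3*x.2) := by
    rcases hp with ⟨h1, h2⟩ | ⟨h1, h2⟩ | ⟨i, h0, h1, h2, h3⟩ | ⟨j, h0, h1, h2, h3⟩ <;> omega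
  clear hp hd1 hd2 p
  rw [memP_even k hk]
  rcases le_or_gt x.2 0 with hb | hb
  · exact Or.inl ⟨by omega, by omega⟩
  · rcases le_or_gt x.2 (2*k) with hb1 | hb1
    · -- q region
      rcases le_or_gt x.2 1 with hc | hc
      · have A := Hq ((2*k+1-x.2)/2) (by omega) (by omega)
        exact Or.inr (Or.inr (Or.inl ⟨(2*k-x.2)/2, by omega, by omega, by omega, by omega⟩))
      · have A := Hq ((2*k+1-x.2)/2) (by omega) (by omega)
        have B := Hq ((2*k+3-x.2)/2) (by omega) (by omega)
        exact Or.inr (Or.inr (Or.inl ⟨(2*k-x.2)/2, by omega, by omega, by omega, by omega⟩))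
    · rcases le_or_gt x.2 (4*k+3) with hb2 | hb2
      · -- r region
        rcases le_or_gt x.2 (2*k+1) with hc | hc
        · have A := Hq 0 (le_refl 0) hk0
          exact Or.inr (Or.inr (Or.inr ⟨0, le_refl 0, hk0, by omega, by omega⟩))
        · have B := Hr ((x.2-(2*k+2))/2) (by omega) (by omega)
          obtain ⟨t, ht | ht⟩ := Int.even_or_odd' x.2
          · exact Or.inr (Or.inr (Or.inr ⟨(x.2-(2*k+1))/2, by omega, by omega, by omega, by omega⟩))
          · exact Or.inr (Or.inr (Or.inr ⟨(x.2-(2*k+1))/2, by omega, by omega, by omega, by omega⟩))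
      · -- impossible: beyond s, but s is shared
        exact Or.inr (Or.inl ⟨by omega, by omega⟩)
lemma dom_mem {S : Set (ℤ × ℤ)} (x : ℤ × ℤ) (c d : ℤ) (hm : ((c, d) : ℤ × ℤ) ∈ S)
    (h1 : d ≤ x.2) (h2 : 3 * (x.2 - d) ≤ 4 * (x.1 - c)) : x ∈ S + sigmaZ :=
  (mem_add_iff S x).mpr ⟨(c, d), hm, h1, h2⟩

lemma succ_subset_odd (k : ℤ) (hk : 0 ≤ k) :
    Pset (2*(k+1)) ⊆ Pset (2*k+1) + sigmaZ := by
  intro x hx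
  rw [memP_even (k+1) (by omega)] at hx
  rcases hx with ⟨h1, h2⟩ | ⟨h1, h2⟩ | ⟨i, h0, h1, h2, h3⟩ | ⟨j, h0, h1, h2, h3⟩
  · exact dom_mem x (k+2) 0 ((memP_odd k hk _).mpr (Or.inl ⟨rfl, rfl⟩)) (by omega) (by omega)
  · exact dom_mem x (3*k+3) (4*k+4) ((memP_odd k hk _).mpr (Or.inr (Or.inl ⟨rfl, rfl⟩)))
      (by omega) (by omega)
  · exact dom_mem x (2*k+2-i) (2*k+1-2*i)
      ((memP_odd k hk _).mpr (Or.inr (Or.inr (Or.inl ⟨i, h0, by omega, rfl, rfl⟩))))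
      (by omega) (by omega)
  · rcases le_or_gt j k with hj | hj
    · exact dom_mem x (2*k+2+j) (2*k+2+2*j)
        ((memP_odd k hk _).mpr (Or.inr (Or.inr (Or.inr ⟨j, h0, hj, rfl, rfl⟩))))
        (by omega) (by omega)
    · exact dom_mem x (3*k+3) (4*k+4) ((memP_odd k hk _).mpr (Or.inr (Or.inl ⟨rfl, rfl⟩)))
        (by omega) (by omega)

lemma succ_subset_even (k : ℤ) (hk : 1 ≤ k) :
    Pset (2*k+1) ⊆ Pset (2*k) + sigmaZ := by
  intro x hx
  rw [memP_odd k (by omega)] at hx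
  rcases hx with ⟨h1, h2⟩ | ⟨h1, h2⟩ | ⟨i, h0, h1, h2, h3⟩ | ⟨j, h0, h1, h2, h3⟩
  · exact dom_mem x (k+1) 0 ((memP_even k hk _).mpr (Or.inl ⟨rfl, rfl⟩)) (by omega) (by omega)
  · exact dom_mem x (3*k+3) (4*k+4) ((memP_even k hk _).mpr (Or.inr (Or.inl ⟨rfl, rfl⟩)))
      (by omega) (by omega)
  · rcases le_or_gt i (k-1) with hi | hi
    · exact dom_mem x (2*k+1-i) (2*k-2*i)
        ((memP_even k hk _).mpr (Or.inr (Or.inr (Or.inl ⟨i, h0, hi, rfl, rfl⟩))))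
        (by omega) (by omega)
    · exact dom_mem x (k+1) 0 ((memP_even k hk _).mpr (Or.inl ⟨rfl, rfl⟩)) (by omega) (by omega)
  · exact dom_mem x (2*k+1+j) (2*k+1+2*j)
      ((memP_even k hk _).mpr (Or.inr (Or.inr (Or.inr ⟨j, h0, h1, rfl, rfl⟩))))
      (by omega) (by omega)

lemma step_odd (k : ℤ) (hk : 0 ≤ k) :
    Pset (2*k+1) + sigmaZ = (Pset (2*k+1) \ Pset (2*(k+1))) ∪ (Pset (2*(k+1)) + sigmaZ) ∧
    Disjoint (Pset (2*k+1) \ Pset (2*(k+1))) (Pset (2*(k+1)) + sigmaZ) := by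
  constructor
  · ext x
    constructor
    · intro hx
      by_cases h2 : x ∈ Pset (2*(k+1)) + sigmaZ
      · exact Or.inr h2
      · exact Or.inl ⟨hard_odd k hk x hx h2, fun hmem => h2 (subset_add _ hmem)⟩
    · rintro (⟨h1, _⟩ | hx)
      · exact subset_add _ h1
      · rw [mem_add_iff] at hx ⊢
        obtain ⟨p, hp, c1, c2⟩ := hx
        have h3 := succ_subset_odd k hk hp
        rw [mem_add_iff] at h3
        obtain ⟨p', hp', d1, d2⟩ := h3
        exact ⟨p', hp', by omega, by omega⟩
  · rw [Set.disjoint_left]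
    rintro x ⟨hxP, hxN⟩ hxB
    rw [memP_odd k hk] at hxP
    rw [mem_add_iff] at hxB
    obtain ⟨p', hp', c1, c2⟩ := hxB
    rw [memP_even (k+1) (by omega)] at hp'
    rcases hxP with ⟨h1, h2⟩ | ⟨h1, h2⟩ | ⟨i, h0, h1, h2, h3⟩ | ⟨j, h0, h1, h2, h3⟩
    · exact hxN ((memP_even (k+1) (by omega) _).mpr (Or.inl ⟨by omega, by omega⟩))
    · rcases hp' with ⟨g1, g2⟩ | ⟨g1, g2⟩ | ⟨i', g0, g1, g2, g3⟩ | ⟨j', g0, g1, g2, g3⟩ <;> omega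
    · rcases hp' with ⟨g1, g2⟩ | ⟨g1, g2⟩ | ⟨i', g0, g1, g2, g3⟩ | ⟨j', g0, g1, g2, g3⟩ <;> omega
    · rcases hp' with ⟨g1, g2⟩ | ⟨g1, g2⟩ | ⟨i', g0, g1, g2, g3⟩ | ⟨j', g0, g1, g2, g3⟩ <;> omega

lemma step_even (k : ℤ) (hk : 1 ≤ k) :
    Pset (2*k) + sigmaZ = (Pset (2*k) \ Pset (2*k+1)) ∪ (Pset (2*k+1) + sigmaZ) ∧
    Disjoint (Pset (2*k) \ Pset (2*k+1)) (Pset (2*k+1) + sigmaZ) := by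
  constructor
  · ext x
    constructor
    · intro hx
      by_cases h2 : x ∈ Pset (2*k+1) + sigmaZ
      · exact Or.inr h2
      · exact Or.inl ⟨hard_even k hk x hx h2, fun hmem => h2 (subset_add _ hmem)⟩
    · rintro (⟨h1, _⟩ | hx)
      · exact subset_add _ h1
      · rw [mem_add_iff] at hx ⊢
        obtain ⟨p, hp, c1, c2⟩ := hx
        have h3 := succ_subset_even k hk hp
        rw [mem_add_iff] at h3
        obtain ⟨p', hp', d1, d2⟩ := h3
        exact ⟨p', hp', by omega, by omega⟩
  · rw [Set.disjoint_left]
    rintro x ⟨hxP, hxN⟩ hxB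
    rw [memP_even k hk] at hxP
    rw [mem_add_iff] at hxB
    obtain ⟨p', hp', c1, c2⟩ := hxB
    rw [memP_odd k (by omega)] at hp'
    rcases hxP with ⟨h1, h2⟩ | ⟨h1, h2⟩ | ⟨i, h0, h1, h2, h3⟩ | ⟨j, h0, h1, h2, h3⟩
    · rcases hp' with ⟨g1, g2⟩ | ⟨g1, g2⟩ | ⟨i', g0, g1, g2, g3⟩ | ⟨j', g0, g1, g2, g3⟩ <;> omega
    · exact hxN ((memP_odd k (by omega) _).mpr (Or.inr (Or.inl ⟨by omega, by omega⟩)))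
    · rcases hp' with ⟨g1, g2⟩ | ⟨g1, g2⟩ | ⟨i', g0, g1, g2, g3⟩ | ⟨j', g0, g1, g2, g3⟩ <;> omega
    · rcases hp' with ⟨g1, g2⟩ | ⟨g1, g2⟩ | ⟨i', g0, g1, g2, g3⟩ | ⟨j', g0, g1, g2, g3⟩ <;> omega


/-- for every integer `n ≥ 1`,
`P_n + σ_Z` is the disjoint union of `P_n \ P_{n+1}` and `P_{n+1} + σ_Z`. -/
theorem Pset_add_sigmaZ_succ (n : ℕ) (hn : 1 ≤ n) :
    Pset (n : ℤ) + sigmaZ =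
      (Pset (n : ℤ) \ Pset ((n : ℤ) + 1)) ∪ (Pset ((n : ℤ) + 1) + sigmaZ) ∧
    Disjoint (Pset (n : ℤ) \ Pset ((n : ℤ) + 1)) (Pset ((n : ℤ) + 1) + sigmaZ) := by
  rcases Nat.even_or_odd n with ⟨m, hm⟩ | ⟨m, hm⟩
  · subst hm
    rw [show (((m + m : ℕ)) : ℤ) = 2*(m:ℤ) by push_cast; ring]
    rw [show (2*(m:ℤ) + 1) = 2*(m:ℤ)+1 from rfl]
    exact step_even m (by omega)
  · subst hm
    rw [show (((2*m + 1 : ℕ)) : ℤ) = 2*(m:ℤ)+1 by push_cast; ring]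
    rw [show (2*(m:ℤ)+1+1) = 2*((m:ℤ)+1) by ring]
    exact step_odd m (by omega)
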